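/- Let p > 2 be a prime, let d > 1 be a divisor of p-1, and let n ≥ 1. Then L_{n,p,d} equals the intersection of all normal subgroups N of F_n such that the quotient F_n/N lies in Ab(p)∗Ab(d). -/

import Mathlib

/-- `subgroupPow m K` is the subgroup generated by all `m`-th powers of elements of `K`. -/
def subgroupPow {G : Type*} [Group G] (m : ℕ) (K : Subgroup G) : Subgroup G :=
  Subgroup.closure {x | ∃ u ∈ K, u ^ m = x}

/-- `Kgen n m = [F_n, F_n] · pow_m(F_n)`. -/
def Kgen (n m : ℕ) : Subgroup (FreeGroup (Fin n)) :=
  ⁅(⊤ : Subgroup (FreeGroup (Fin n))), (⊤ : Subgroup (FreeGroup (Fin n)))⁆ ⊔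
    subgroupPow m (⊤ : Subgroup (FreeGroup (Fin n)))

/-- `Lgen n p d = [K_{n,d}, K_{n,d}] · pow_p(K_{n,d})`. -/
def Lgen (n p d : ℕ) : Subgroup (FreeGroup (Fin n)) :=
  ⁅Kgen n d, Kgen n d⁆ ⊔ subgroupPow p (Kgen n d)

open scoped commutatorElement

/-- A group `G` lies in `Ab(p) ∗ Ab(d)` if it is finite and has a normal subgroup `N` that is
abelian of exponent dividing `p`, with `G/N` abelian of exponent dividing `d`. -/
def InAbStar (p d : ℕ) (G : Type*) [Group G] : Prop :=
  Finite G ∧ ∃ N : Subgroup G, N.Normal ∧ (∀ a ∈ N, ∀ b ∈ N, a * b = b * a) ∧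
    (∀ a ∈ N, a ^ p = 1) ∧ (∀ g h : G, ⁅g, h⁆ ∈ N) ∧ (∀ g : G, g ^ d ∈ N)

section Aux

variable {G : Type*} [Group G]

lemma mem_subgroupPow {m : ℕ} {K : Subgroup G} {u : G} (hu : u ∈ K) :
    u ^ m ∈ subgroupPow m K :=
  Subgroup.subset_closure ⟨u, hu, rfl⟩

lemma subgroupPow_le {m : ℕ} {K H : Subgroup G} (h : ∀ u ∈ K, u ^ m ∈ H) :
    subgroupPow m K ≤ H := by
  rw [subgroupPow, Subgroup.closure_le]
  rintro x ⟨u, hu, rfl⟩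
  exact h u hu

lemma subgroupPow_le_self (m : ℕ) (K : Subgroup G) : subgroupPow m K ≤ K :=
  subgroupPow_le fun u hu => K.pow_mem hu m

lemma subgroupPow_normal (m : ℕ) (K : Subgroup G) [hK : K.Normal] :
    (subgroupPow m K).Normal := by
  constructor
  intro x hx g
  have : (MulAut.conj g).toMonoidHom x ∈ (subgroupPow m K).map (MulAut.conj g).toMonoidHom :=
    Subgroup.mem_map_of_mem _ hx
  rw [subgroupPow, MonoidHom.map_closure] at this
  refine Subgroup.closure_mono ?_ this
  rintro y ⟨z, ⟨u, hu, rfl⟩, rfl⟩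
  exact ⟨g * u * g⁻¹, hK.conj_mem u hu g, by simp [MulAut.conj, conj_pow]⟩

lemma Kgen_normal (n m : ℕ) : (Kgen n m).Normal := by
  haveI := subgroupPow_normal m (⊤ : Subgroup (FreeGroup (Fin n)))
  unfold Kgen
  infer_instance

lemma Lgen_normal (n p d : ℕ) : (Lgen n p d).Normal := by
  haveI := Kgen_normal n d
  haveI := subgroupPow_normal p (Kgen n d)
  unfold Lgen
  infer_instance

lemma Lgen_le_Kgen (n p d : ℕ) : Lgen n p d ≤ Kgen n d := by
  apply sup_le
  · rw [Subgroup.commutator_le]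
    intro g hg h hh
    exact (Kgen n d).mul_mem (mul_mem (mul_mem hg hh) (inv_mem hg)) (inv_mem hh)
  · exact subgroupPow_le_self _ _

lemma finite_of_comm_exp {G : Type*} [Group G] [Group.FG G]
    (hcomm : ∀ a b : G, a * b = b * a) {m : ℕ} (hm : m ≠ 0) (hexp : ∀ g : G, g ^ m = 1) :
    Finite G := by
  letI : CommGroup G := { (inferInstance : Group G) with mul_comm := hcomm }
  exact CommGroup.finite_of_fg_torsion G fun g =>
    isOfFinOrder_iff_pow_eq_one.mpr ⟨m, Nat.pos_of_ne_zero hm, hexp g⟩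

instance freeGroup_fg (n : ℕ) : Group.FG (FreeGroup (Fin n)) :=
  Group.fg_iff.mpr ⟨Set.range FreeGroup.of, FreeGroup.closure_range_of _, Set.finite_range _⟩

end Aux

/-- `L_{n,p,d}` is the intersection of all normal subgroups `N` of `F_n` such that
`F_n / N` lies in `Ab(p) ∗ Ab(d)`. -/
theorem stmt_2 (p d n : ℕ) (hp : p.Prime) (hp2 : 2 < p) (hd : 1 < d)
    (hdvd : d ∣ p - 1) (hn : 1 ≤ n) :
    Lgen n p d = sInf {N : Subgroup (FreeGroup (Fin n)) |
      ∃ hN : N.Normal, letI := hN; InAbStar p d (FreeGroup (Fin n) ⧸ N)} := by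
  haveI hKnorm : (Kgen n d).Normal := Kgen_normal n d
  haveI hLnorm : (Lgen n p d).Normal := Lgen_normal n p d
  set F := FreeGroup (Fin n)
  apply le_antisymm
  · apply le_sInf
    rintro N ⟨hN, hfin, M, hMnorm, hMcomm, hMexp, hMcommutators, hMpow⟩
    set π : F →* F ⧸ N := QuotientGroup.mk' N with hπ
    have hK : ∀ x ∈ Kgen n d, π x ∈ M := by
      have : Kgen n d ≤ M.comap π := by
        apply sup_le
        · rw [Subgroup.commutator_le]
          intro g _ h _
          rw [Subgroup.mem_comap, map_commutatorElement]
          exact hMcommutators _ _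
        · apply subgroupPow_le
          intro u _
          rw [Subgroup.mem_comap, map_pow]
          exact hMpow _
      exact fun x hx => this hx
    have : Lgen n p d ≤ π.ker := by
      apply sup_le
      · rw [Subgroup.commutator_le]
        intro g hg h hh
        rw [MonoidHom.mem_ker, map_commutatorElement]
        exact commutatorElement_eq_one_iff_mul_comm.mpr (hMcomm _ (hK g hg) _ (hK h hh))
      · apply subgroupPow_le
        intro u hu
        rw [MonoidHom.mem_ker, map_pow]
        exact hMexp _ (hK u hu)
    rwa [hπ, QuotientGroup.ker_mk'] at this
  · apply sInf_le
    refine ⟨hLnorm, ?_⟩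
    set π : F →* F ⧸ Lgen n p d := QuotientGroup.mk' (Lgen n p d) with hπ
    have hπs : Function.Surjective π := QuotientGroup.mk'_surjective _
    have hπone : ∀ x ∈ Lgen n p d, π x = 1 := fun x hx =>
      (QuotientGroup.eq_one_iff x).mpr hx
    -- F ⧸ Kgen is finite
    haveI hFK : Finite (F ⧸ Kgen n d) := by
      set ρ : F →* F ⧸ Kgen n d := QuotientGroup.mk' (Kgen n d) with hρ
      have hρs : Function.Surjective ρ := QuotientGroup.mk'_surjective _
      haveI : Group.FG (F ⧸ Kgen n d) := Group.fg_of_surjective hρs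
      apply finite_of_comm_exp (m := d) ?_ (by omega)
      · intro g
        obtain ⟨u, rfl⟩ := hρs g
        rw [← map_pow, hρ]
        exact (QuotientGroup.eq_one_iff _).mpr (Subgroup.mem_sup_right (mem_subgroupPow (Subgroup.mem_top _)))
      · intro a b
        obtain ⟨u, rfl⟩ := hρs a
        obtain ⟨v, rfl⟩ := hρs b
        apply commutatorElement_eq_one_iff_mul_comm.mp
        rw [← map_commutatorElement, hρ]
        exact (QuotientGroup.eq_one_iff _).mpr
          (Subgroup.mem_sup_left (Subgroup.commutator_mem_commutator (Subgroup.mem_top _) (Subgroup.mem_top _)))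
    haveI : (Kgen n d).FiniteIndex := Subgroup.finiteIndex_of_finite_quotient
    haveI : Group.FG (Kgen n d) := Subgroup.fg_of_index_ne_zero _
    -- Kgen ⧸ Lgen is finite
    haveI hLK : ((Lgen n p d).subgroupOf (Kgen n d)).Normal := hLnorm.subgroupOf _
    haveI hKL : Finite (Kgen n d ⧸ (Lgen n p d).subgroupOf (Kgen n d)) := by
      set ρ : (Kgen n d) →* Kgen n d ⧸ (Lgen n p d).subgroupOf (Kgen n d) :=
        QuotientGroup.mk' _ with hρ
      have hρs : Function.Surjective ρ := QuotientGroup.mk'_surjective _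
      haveI : Group.FG (Kgen n d ⧸ (Lgen n p d).subgroupOf (Kgen n d)) :=
        Group.fg_of_surjective hρs
      apply finite_of_comm_exp (m := p) ?_ hp.ne_zero
      · intro g
        obtain ⟨u, rfl⟩ := hρs g
        rw [← map_pow, hρ]
        refine (QuotientGroup.eq_one_iff _).mpr ?_
        rw [Subgroup.mem_subgroupOf]
        have : ((u ^ p : Kgen n d) : F) = (u : F) ^ p := by push_cast; ring
        rw [this]
        exact Subgroup.mem_sup_right (mem_subgroupPow u.2)
      · intro a b
        obtain ⟨u, rfl⟩ := hρs a
        obtain ⟨v, rfl⟩ := hρs b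
        apply commutatorElement_eq_one_iff_mul_comm.mp
        rw [← map_commutatorElement, hρ]
        refine (QuotientGroup.eq_one_iff _).mpr ?_
        rw [Subgroup.mem_subgroupOf]
        have : ((⁅u, v⁆ : Kgen n d) : F) = ⁅(u : F), (v : F)⁆ := by
          simp [commutatorElement_def]
        rw [this]
        exact Subgroup.mem_sup_left (Subgroup.commutator_mem_commutator u.2 v.2)
    -- F ⧸ Lgen is finite
    haveI hFin : Finite (F ⧸ Lgen n p d) := by
      have h1 : (Lgen n p d).relIndex (Kgen n d) ≠ 0 := by
        rw [Subgroup.relIndex, Subgroup.index_eq_card]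
        exact Nat.card_ne_zero.mpr ⟨inferInstance, inferInstance⟩
      have h2 : (Kgen n d).index ≠ 0 := Subgroup.index_ne_zero_of_finite
      have h3 := Subgroup.relIndex_mul_index (Lgen_le_Kgen n p d)
      have h4 : (Lgen n p d).index ≠ 0 := by
        rw [← h3]; exact Nat.mul_ne_zero h1 h2
      rw [Subgroup.index_eq_card] at h4
      exact (Nat.card_ne_zero.mp h4).2
    refine ⟨hFin, (Kgen n d).map π, hKnorm.map π hπs, ?_, ?_, ?_, ?_⟩
    · rintro a ⟨g, hg, rfl⟩ b ⟨h, hh, rfl⟩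
      apply commutatorElement_eq_one_iff_mul_comm.mp
      rw [← map_commutatorElement]
      exact hπone _ (Subgroup.mem_sup_left (Subgroup.commutator_mem_commutator hg hh))
    · rintro a ⟨g, hg, rfl⟩
      rw [← map_pow]
      exact hπone _ (Subgroup.mem_sup_right (mem_subgroupPow hg))
    · intro g h
      obtain ⟨u, rfl⟩ := hπs g
      obtain ⟨v, rfl⟩ := hπs h
      rw [← map_commutatorElement]
      exact Subgroup.mem_map_of_mem π
        (Subgroup.mem_sup_left (Subgroup.commutator_mem_commutator (Subgroup.mem_top _) (Subgroup.mem_top _)))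
    · intro g
      obtain ⟨u, rfl⟩ := hπs g
      rw [← map_pow]
      exact Subgroup.mem_map_of_mem π (Subgroup.mem_sup_right (mem_subgroupPow (Subgroup.mem_top _)))
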